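/- Let A be a quaternion division algebra over a field F of characteristic 2 and let y, y' ∈ A (or in a biquaternion algebra) be square-central elements (y², y'² ∈ F^×, y, y' noncentral) that do not commute. Set t = y y' + y' y and r = y y' + y' y + y'. Then t ≠ 0, r ≠ 0, t commutes with both y and y' (so t is central in F[y,y']), y r + r y = t, and q = y r t^{-1} satisfies q² + q ∈ Z(F[y,y']) and q r + r q = r; hence F[y,y'] is a quaternion algebra over its center. -/
import Mathlib

set_option maxHeartbeats 1600000



/-- Non-commuting square-central elements in characteristic 2: with
`t = yy' + y'y` and `r = t + y'`, one has `t ≠ 0`, `r ≠ 0`, `t` commutes with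
`y` and `y'`, `yr + ry = t`, and `q = y r t⁻¹` satisfies `qr + rq = r` and
`q² + q` commutes with `y` and `y'`. -/
theorem squareCentral_noncommuting_pair
    {F A : Type*} [Field F] [DivisionRing A] [Algebra F A] [CharP F 2]
    (y y' : A) (a a' : F) (ha : a ≠ 0) (ha' : a' ≠ 0)
    (hy : y * y = algebraMap F A a) (hy' : y' * y' = algebraMap F A a')
    (hync : ∀ s : F, y ≠ algebraMap F A s)
    (hy'nc : ∀ s : F, y' ≠ algebraMap F A s)
    (hne : y * y' ≠ y' * y) :
    y * y' + y' * y ≠ 0 ∧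
    y * y' + y' * y + y' ≠ 0 ∧
    (y * y' + y' * y) * y = y * (y * y' + y' * y) ∧
    (y * y' + y' * y) * y' = y' * (y * y' + y' * y) ∧
    y * (y * y' + y' * y + y') + (y * y' + y' * y + y') * y = y * y' + y' * y ∧
    (y * (y * y' + y' * y + y') * (y * y' + y' * y)⁻¹) * (y * y' + y' * y + y')
        + (y * y' + y' * y + y') * (y * (y * y' + y' * y + y') * (y * y' + y' * y)⁻¹)
      = y * y' + y' * y + y' ∧
    ((y * (y * y' + y' * y + y') * (y * y' + y' * y)⁻¹) *
        (y * (y * y' + y' * y + y') * (y * y' + y' * y)⁻¹) +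
        (y * (y * y' + y' * y + y') * (y * y' + y' * y)⁻¹)) * y
      = y * ((y * (y * y' + y' * y + y') * (y * y' + y' * y)⁻¹) *
        (y * (y * y' + y' * y + y') * (y * y' + y' * y)⁻¹) +
        (y * (y * y' + y' * y + y') * (y * y' + y' * y)⁻¹)) ∧
    ((y * (y * y' + y' * y + y') * (y * y' + y' * y)⁻¹) *
        (y * (y * y' + y' * y + y') * (y * y' + y' * y)⁻¹) +
        (y * (y * y' + y' * y + y') * (y * y' + y' * y)⁻¹)) * y'
      = y' * ((y * (y * y' + y' * y + y') * (y * y' + y' * y)⁻¹) *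
        (y * (y * y' + y' * y + y') * (y * y' + y' * y)⁻¹) +
        (y * (y * y' + y' * y + y') * (y * y' + y' * y)⁻¹)) := by
  haveI : CharP A 2 := charP_of_injective_algebraMap (algebraMap F A).injective 2
  have add_self : ∀ x : A, x + x = 0 := fun x => CharTwo.add_self_eq_zero x
  have eq_of_add : ∀ x z : A, x + z = 0 → x = z := by
    intro x z h
    have h1 : x = x + (z + z) := by rw [add_self, add_zero]
    calc x = x + (z + z) := h1
      _ = (x + z) + z := (add_assoc x z z).symm
      _ = z := by rw [h, zero_add]
  have move : ∀ x z c : A, x + z = c → x = z + c := by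
    intro x z c h
    calc x = x + (z + z) := by rw [add_self, add_zero]
      _ = z + (x + z) := by abel
      _ = z + c := by rw [h]
  set t := y * y' + y' * y with ht
  set r := t + y' with hr
  set q := y * r * t⁻¹ with hq
  clear_value q r t
  have haA : ∀ x : A, algebraMap F A a * x = x * algebraMap F A a :=
    fun x => Algebra.commutes a x
  have ha'A : ∀ x : A, algebraMap F A a' * x = x * algebraMap F A a' :=
    fun x => Algebra.commutes a' x
  have hty : t * y = y * t := by
    rw [ht]
    calc (y * y' + y' * y) * y = y * (y' * y) + y' * (y * y) := by noncomm_ring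
      _ = y * (y' * y) + y' * algebraMap F A a := by rw [hy]
      _ = y * (y' * y) + algebraMap F A a * y' := by rw [← haA]
      _ = y * (y' * y) + (y * y) * y' := by rw [hy]
      _ = y * (y * y' + y' * y) := by noncomm_ring
  have hty' : t * y' = y' * t := by
    rw [ht]
    calc (y * y' + y' * y) * y' = y * (y' * y') + (y' * y) * y' := by noncomm_ring
      _ = y * algebraMap F A a' + (y' * y) * y' := by rw [hy']
      _ = algebraMap F A a' * y + (y' * y) * y' := by rw [← ha'A]
      _ = (y' * y') * y + (y' * y) * y' := by rw [hy']
      _ = y' * (y * y' + y' * y) := by noncomm_ring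
  have htne : t ≠ 0 := by
    intro h
    rw [ht] at h
    exact hne (eq_of_add _ _ h)
  have hrne : r ≠ 0 := by
    intro h
    rw [hr] at h
    have hy'eq : t = y' := eq_of_add _ _ h
    apply hne
    calc y * y' = y * t := by rw [hy'eq]
      _ = t * y := (hty).symm
      _ = y' * y := by rw [hy'eq]
  have hytinv : y * t⁻¹ = t⁻¹ * y := ((Commute.inv_left₀ hty).symm : _)
  have hy'tinv : y' * t⁻¹ = t⁻¹ * y' := ((Commute.inv_left₀ hty').symm : _)
  have htr : t * r = r * t := by
    rw [hr]
    calc t * (t + y') = t * t + t * y' := by noncomm_ring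
      _ = t * t + y' * t := by rw [hty']
      _ = (t + y') * t := by noncomm_ring
  have hrtinv : r * t⁻¹ = t⁻¹ * r := ((Commute.inv_left₀ htr).symm : _)
  have hry' : r * y' = y' * r := by
    rw [hr]
    calc (t + y') * y' = t * y' + y' * y' := by noncomm_ring
      _ = y' * t + y' * y' := by rw [hty']
      _ = y' * (t + y') := by noncomm_ring
  have hyr : y * r + r * y = t := by
    calc y * r + r * y = (y * t + t * y) + (y * y' + y' * y) := by rw [hr]; noncomm_ring
      _ = (y * t + y * t) + t := by rw [hty, ht]
      _ = 0 + t := by rw [add_self]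
      _ = t := zero_add t
  have hqr : q * r + r * q = r := by
    calc q * r + r * q = y * r * (t⁻¹ * r) + (r * y) * (r * t⁻¹) := by rw [hq]; noncomm_ring
      _ = y * r * (r * t⁻¹) + (r * y) * (r * t⁻¹) := by rw [hrtinv]
      _ = (y * r + r * y) * (r * t⁻¹) := by noncomm_ring
      _ = t * (r * t⁻¹) := by rw [hyr]
      _ = r * (t * t⁻¹) := by rw [← mul_assoc, htr, mul_assoc]
      _ = r := by rw [mul_inv_cancel₀ htne, mul_one]
  have hryeq : r * y = y * r + t := by
    apply move
    calc r * y + y * r = y * r + r * y := by abel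
      _ = t := hyr
  have hqy : q * y = y * q + y := by
    apply move
    calc q * y + y * q = y * r * (t⁻¹ * y) + y * (y * r * t⁻¹) := by rw [hq]; noncomm_ring
      _ = y * (r * y) * t⁻¹ + (y * y) * r * t⁻¹ := by rw [← hytinv]; noncomm_ring
      _ = y * (y * r + t) * t⁻¹ + (y * y) * r * t⁻¹ := by rw [hryeq]
      _ = ((y * y) * r * t⁻¹ + (y * y) * r * t⁻¹) + y * (t * t⁻¹) := by noncomm_ring
      _ = 0 + y * 1 := by rw [add_self, mul_inv_cancel₀ htne]
      _ = y := by rw [zero_add, mul_one]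
  have hqy' : q * y' = y' * q + r := by
    apply move
    calc q * y' + y' * q = y * r * (t⁻¹ * y') + (y' * y) * (r * t⁻¹) := by
          rw [hq]; noncomm_ring
      _ = y * (r * y') * t⁻¹ + (y' * y) * (r * t⁻¹) := by rw [← hy'tinv]; noncomm_ring
      _ = y * (y' * r) * t⁻¹ + (y' * y) * (r * t⁻¹) := by rw [hry']
      _ = (y * y' + y' * y) * (r * t⁻¹) := by noncomm_ring
      _ = t * (r * t⁻¹) := by rw [ht]
      _ = r * (t * t⁻¹) := by rw [← mul_assoc, htr, mul_assoc]
      _ = r := by rw [mul_inv_cancel₀ htne, mul_one]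
  refine ⟨htne, hrne, hty, hty', hyr, hqr, ?_, ?_⟩
  · calc (q * q + q) * y = q * (q * y) + q * y := by noncomm_ring
      _ = q * (y * q + y) + (y * q + y) := by rw [hqy]
      _ = (q * y) * q + (q * y + y * q) + y := by noncomm_ring
      _ = (y * q + y) * q + ((y * q + y) + y * q) + y := by rw [hqy]
      _ = y * (q * q + q) + ((y * q + y * q) + (y + y)) := by noncomm_ring
      _ = y * (q * q + q) := by rw [add_self, add_self, add_zero, add_zero]
  · calc (q * q + q) * y' = q * (q * y') + q * y' := by noncomm_ring
      _ = q * (y' * q + r) + (y' * q + r) := by rw [hqy']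
      _ = (q * y') * q + (q * r + y' * q) + r := by noncomm_ring
      _ = (y' * q + r) * q + (q * r + y' * q) + r := by rw [hqy']
      _ = y' * (q * q + q) + ((q * r + r * q) + r) := by noncomm_ring
      _ = y' * (q * q + q) + (r + r) := by rw [hqr]
      _ = y' * (q * q + q) := by rw [add_self, add_zero]
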